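/- Let a = ⟨λ₁,…,λ_k⟩ be as above with dominant root κ, and suppose a_n = B κ^n + o(κ^n) with B > 0. Fix a nonnegative integer c, and let L(j,t) be as above. Then there is a constant B_c > 0 such that L(t+c, t) = B_c κ^t + o(κ^t) as t → ∞, where B_c = B(κ−1)/(Λ−1) if c = 0, B_c = B if c ≥ k, and B_c = (1/(Λ−1))·((Λ_c − 1)B + Σ_{i=c+1}^{k} λ_i B κ^{c+1−i}) if 1 ≤ c < k. -/

import Mathlib

open Filter

/-- `Λ_j = λ₁ + ⋯ + λ_j`. -/
def Lam (lam : ℕ → ℕ) (j : ℕ) : ℕ := ∑ i ∈ Finset.Icc 1 j, lam i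

/-- with `κ` the dominant root, `a_n = B κ^n + o(κ^n)` with
`B > 0`, and `L(j,t)` the leaf count satisfying
`(Λ-1) L(j,t) = a_{j+1} + (Λ_{j-t} - 1) a_t - ∑_{i=1}^{j-t} λ_i a_{j+1-i}`,
for each fixed `c ≥ 0` there is a constant `B_c > 0` with
`L(t+c, t) = B_c κ^t + o(κ^t)`, where `B_c = B(κ-1)/(Λ-1)` if `c = 0`,
`B_c = B` if `c ≥ k`, and
`B_c = (1/(Λ-1))((Λ_c - 1)B + ∑_{i=c+1}^k λ_i B κ^{c+1-i})` if `1 ≤ c < k`. -/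
theorem stmt18 (k : ℕ) (lam : ℕ → ℕ) (hk : 1 ≤ k)
    (h1 : 1 ≤ lam 1) (hkpos : 1 ≤ lam k) (hzero : ∀ i, k < i → lam i = 0)
    (hΛ : 2 ≤ Lam lam k)
    (a : ℤ → ℝ)
    (ha0 : ∀ i : ℤ, i ≤ 0 → a i = 1)
    (harec : ∀ n : ℤ, 1 ≤ n → a n = ∑ i ∈ Finset.Icc 1 k, (lam i : ℝ) * a (n - i))
    (κ : ℝ) (hκ : 1 < κ)
    (hroot : κ ^ k = ∑ i ∈ Finset.Icc 1 k, (lam i : ℝ) * κ ^ (k - i))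
    (B : ℝ) (hB : 0 < B)
    (hasym : Tendsto (fun n : ℕ => a n / κ ^ n) atTop (nhds B))
    (L : ℕ → ℕ → ℝ)
    (hL : ∀ j t : ℕ, t ≤ j →
      ((Lam lam k : ℝ) - 1) * L j t
        = a (j + 1) + ((Lam lam (j - t) : ℝ) - 1) * a t
          - ∑ i ∈ Finset.Icc 1 (j - t), (lam i : ℝ) * a ((j : ℤ) + 1 - i))
    (c : ℕ) :
    ∃ Bc : ℝ,
      Bc = (if c = 0 then B * (κ - 1) / ((Lam lam k : ℝ) - 1)
            else if k ≤ c then B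
            else (1 / ((Lam lam k : ℝ) - 1)) *
              (((Lam lam c : ℝ) - 1) * B +
                ∑ i ∈ Finset.Icc (c + 1) k, (lam i : ℝ) * B * κ ^ ((c : ℤ) + 1 - i))) ∧
      0 < Bc ∧
      Tendsto (fun t : ℕ => L (t + c) t / κ ^ t) atTop (nhds Bc) := by
  have hκ0 : (0:ℝ) < κ := lt_trans one_pos hκ
  have hκne : κ ≠ 0 := ne_of_gt hκ0
  have hΛr : (0:ℝ) < (Lam lam k : ℝ) - 1 := by
    have : (2:ℝ) ≤ (Lam lam k : ℝ) := by exact_mod_cast hΛ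
    linarith
  have hΛne : ((Lam lam k : ℝ) - 1) ≠ 0 := ne_of_gt hΛr
  -- root identity in zpow form
  have hrootz : ∀ m : ℤ, κ ^ m = ∑ i ∈ Finset.Icc 1 k, (lam i : ℝ) * κ ^ (m - i) := by
    intro m
    have h0 : (κ:ℝ) ^ (k:ℤ) = ∑ i ∈ Finset.Icc 1 k, (lam i : ℝ) * κ ^ ((k:ℤ) - i) := by
      rw [zpow_natCast, hroot]
      refine Finset.sum_congr rfl fun i hi => ?_
      have hik : i ≤ k := (Finset.mem_Icc.mp hi).2
      rw [← zpow_natCast, Nat.cast_sub hik]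
    have : κ ^ m = κ ^ ((k:ℤ)) * κ ^ (m - k) := by
      rw [← zpow_add₀ hκne]; ring_nf
    rw [this, h0, Finset.sum_mul]
    refine Finset.sum_congr rfl fun i hi => ?_
    rw [mul_assoc, ← zpow_add₀ hκne]; ring_nf
  -- shift lemma (nat shift)
  have hshift : ∀ m : ℕ, Tendsto (fun t : ℕ => a ((t:ℤ) + m) / κ ^ t) atTop
      (nhds (B * κ ^ m)) := by
    intro m
    have h1 : Tendsto (fun t : ℕ => a ((t + m : ℕ)) / κ ^ (t + m)) atTop (nhds B) :=
      hasym.comp (tendsto_add_atTop_nat m)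
    have h2 := h1.mul_const (κ ^ m)
    refine h2.congr fun t => ?_
    have harg : ((t + m : ℕ) : ℤ) = (t:ℤ) + m := by push_cast; ring
    rw [harg, pow_add]
    field_simp
  -- shift lemma (int shift, nonneg)
  have hshiftz : ∀ m : ℤ, 0 ≤ m → Tendsto (fun t : ℕ => a ((t:ℤ) + m) / κ ^ t) atTop
      (nhds (B * κ ^ m)) := by
    intro m hm
    obtain ⟨n, rfl⟩ := Int.eq_ofNat_of_zero_le hm
    simpa [zpow_natCast] using hshift n
  -- the limit of the big expression
  have T1 : Tendsto (fun t : ℕ => a (((t + c : ℕ) : ℤ) + 1) / κ ^ t) atTop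
      (nhds (B * κ ^ (c + 1))) := by
    refine (hshift (c + 1)).congr fun t => ?_
    congr 1 <;> (push_cast; try ring)
  have T3 : Tendsto (fun t : ℕ =>
      ∑ i ∈ Finset.Icc 1 c, (lam i : ℝ) * (a (((t + c : ℕ) : ℤ) + 1 - i) / κ ^ t)) atTop
      (nhds (∑ i ∈ Finset.Icc 1 c, (lam i : ℝ) * (B * κ ^ ((c:ℤ) + 1 - i)))) := by
    refine tendsto_finset_sum _ fun i hi => ?_
    have hic : (i:ℤ) ≤ (c:ℤ) := by exact_mod_cast (Finset.mem_Icc.mp hi).2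
    have h0 : (0:ℤ) ≤ (c:ℤ) + 1 - i := by omega
    have := (hshiftz ((c:ℤ) + 1 - i) h0).const_mul (lam i : ℝ)
    refine this.congr fun t => ?_
    congr 2 <;> (push_cast; try ring)
  have Etend : Tendsto (fun t : ℕ =>
      a (((t + c : ℕ) : ℤ) + 1) / κ ^ t + ((Lam lam c : ℝ) - 1) * (a (t:ℤ) / κ ^ t)
        - ∑ i ∈ Finset.Icc 1 c, (lam i : ℝ) * (a (((t + c : ℕ) : ℤ) + 1 - i) / κ ^ t))
      atTop (nhds (B * κ ^ (c + 1) + ((Lam lam c : ℝ) - 1) * B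
        - ∑ i ∈ Finset.Icc 1 c, (lam i : ℝ) * (B * κ ^ ((c:ℤ) + 1 - i)))) :=
    (T1.add (hasym.const_mul _)).sub T3
  set M : ℝ := B * κ ^ (c + 1) + ((Lam lam c : ℝ) - 1) * B
        - ∑ i ∈ Finset.Icc 1 c, (lam i : ℝ) * (B * κ ^ ((c:ℤ) + 1 - i)) with hM
  -- L(t+c,t)/κ^t equals (1/(Λ-1)) * E t
  have hLfun : ∀ t : ℕ, L (t + c) t / κ ^ t = (1 / ((Lam lam k : ℝ) - 1)) *
      (a (((t + c : ℕ) : ℤ) + 1) / κ ^ t + ((Lam lam c : ℝ) - 1) * (a (t:ℤ) / κ ^ t)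
        - ∑ i ∈ Finset.Icc 1 c, (lam i : ℝ) * (a (((t + c : ℕ) : ℤ) + 1 - i) / κ ^ t)) := by
    intro t
    have h := hL (t + c) t (Nat.le_add_right t c)
    rw [Nat.add_sub_cancel_left] at h
    have hκt : (κ:ℝ) ^ t ≠ 0 := pow_ne_zero _ hκne
    have key : ((Lam lam k : ℝ) - 1) * (L (t + c) t / κ ^ t)
        = a (((t + c : ℕ) : ℤ) + 1) / κ ^ t + ((Lam lam c : ℝ) - 1) * (a (t:ℤ) / κ ^ t)
          - ∑ i ∈ Finset.Icc 1 c, (lam i : ℝ) * (a (((t + c : ℕ) : ℤ) + 1 - i) / κ ^ t) := by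
      rw [← mul_div_assoc, h, sub_div, add_div, Finset.sum_div]
      congr 1
      · congr 1
        rw [mul_div_assoc]
      · refine Finset.sum_congr rfl fun i hi => ?_
        rw [mul_div_assoc]
    rw [← key, ← mul_assoc, one_div, inv_mul_cancel₀ hΛne, one_mul]
  have main : Tendsto (fun t : ℕ => L (t + c) t / κ ^ t) atTop
      (nhds ((1 / ((Lam lam k : ℝ) - 1)) * M)) := by
    refine (Etend.const_mul _).congr fun t => (hLfun t).symm
  refine ⟨_, rfl, ?_, ?_⟩
  · -- positivity
    split_ifs with hc0 hkc
    · exact div_pos (mul_pos hB (by linarith)) hΛr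
    · exact hB
    · have hck : c < k := lt_of_not_ge hkc
      have hc1 : 1 ≤ c := Nat.one_le_iff_ne_zero.mpr hc0
      refine mul_pos (by positivity) ?_
      have hΛc : (1:ℝ) ≤ (Lam lam c : ℝ) := by
        have : 1 ≤ Lam lam c := le_trans h1 (Finset.single_le_sum
          (f := fun i => lam i) (fun i _ => Nat.zero_le _)
          (Finset.mem_Icc.mpr ⟨le_refl 1, hc1⟩))
        exact_mod_cast this
      have hsum : 0 < ∑ i ∈ Finset.Icc (c + 1) k, (lam i : ℝ) * B * κ ^ ((c:ℤ) + 1 - i) := by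
        have hkmem : k ∈ Finset.Icc (c + 1) k := Finset.mem_Icc.mpr ⟨hck, le_refl k⟩
        have hterm : 0 < (lam k : ℝ) * B * κ ^ ((c:ℤ) + 1 - k) := by
          have : (1:ℝ) ≤ (lam k : ℝ) := by exact_mod_cast hkpos
          positivity
        refine lt_of_lt_of_le hterm (Finset.single_le_sum (f := fun i =>
          (lam i : ℝ) * B * κ ^ ((c:ℤ) + 1 - i)) (fun i _ => by positivity) hkmem)
      nlinarith
  · -- limit; show (1/(Λ-1)) * M = Bc
    convert main using 2
    split_ifs with hc0 hkc
    · subst hc0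
      rw [hM]
      have he : Finset.Icc 1 0 = (∅ : Finset ℕ) := rfl
      simp only [Lam, he, Finset.sum_empty, Nat.cast_zero]
      push_cast
      ring
    · -- c ≥ k : M = (Λ-1) * B
      have hLamc : Lam lam c = Lam lam k := by
        unfold Lam
        rw [← Finset.sum_subset (Finset.Icc_subset_Icc_right hkc)]
        intro i hi hni
        simp only [Finset.mem_Icc, not_and, not_le] at hi hni
        exact hzero i (hni hi.1)
      have hsum : ∑ i ∈ Finset.Icc 1 c, (lam i : ℝ) * (B * κ ^ ((c:ℤ) + 1 - i))
          = B * κ ^ (c + 1) := by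
        rw [← Finset.sum_subset (Finset.Icc_subset_Icc_right hkc)
          (fun i hi hni => by
            simp only [Finset.mem_Icc, not_and, not_le] at hi hni
            simp [hzero i (hni hi.1)])]
        have := hrootz ((c:ℤ) + 1)
        rw [← zpow_natCast κ (c+1)]
        push_cast
        rw [this, Finset.mul_sum]
        refine Finset.sum_congr rfl fun i hi => by ring
      rw [hM, hLamc, hsum]
      field_simp
      ring
    · -- 1 ≤ c < k
      have hck : c ≤ k := le_of_lt (lt_of_not_ge hkc)
      have hsplit : ∑ i ∈ Finset.Icc 1 k, (lam i : ℝ) * κ ^ ((c:ℤ) + 1 - i)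
          = (∑ i ∈ Finset.Icc 1 c, (lam i : ℝ) * κ ^ ((c:ℤ) + 1 - i))
            + ∑ i ∈ Finset.Icc (c + 1) k, (lam i : ℝ) * κ ^ ((c:ℤ) + 1 - i) := by
        have h01 : Finset.Icc 1 k = Finset.Ioc 0 k := by
          rw [← Finset.Icc_add_one_left_eq_Ioc, zero_add]
        have h02 : Finset.Icc 1 c = Finset.Ioc 0 c := by
          rw [← Finset.Icc_add_one_left_eq_Ioc, zero_add]
        have h03 : Finset.Icc (c+1) k = Finset.Ioc c k := by
          rw [← Finset.Icc_add_one_left_eq_Ioc]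
        rw [h01, h02, h03]
        exact (Finset.sum_Ioc_consecutive _ (Nat.zero_le c) hck).symm
      have hroot1 : κ ^ ((c:ℤ) + 1) = ∑ i ∈ Finset.Icc 1 k, (lam i : ℝ) * κ ^ ((c:ℤ) + 1 - i) :=
        hrootz _
      have hpow : (κ:ℝ) ^ (c + 1) = κ ^ ((c:ℤ) + 1) := by
        rw [← zpow_natCast]; push_cast; ring_nf
      have e1 : ∑ i ∈ Finset.Icc 1 c, (lam i : ℝ) * (B * κ ^ ((c:ℤ) + 1 - i))
          = B * ∑ i ∈ Finset.Icc 1 c, (lam i : ℝ) * κ ^ ((c:ℤ) + 1 - i) := by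
        rw [Finset.mul_sum]; exact Finset.sum_congr rfl fun i _ => by ring
      have e2 : ∑ i ∈ Finset.Icc (c+1) k, (lam i : ℝ) * B * κ ^ ((c:ℤ) + 1 - i)
          = B * ∑ i ∈ Finset.Icc (c+1) k, (lam i : ℝ) * κ ^ ((c:ℤ) + 1 - i) := by
        rw [Finset.mul_sum]; exact Finset.sum_congr rfl fun i _ => by ring
      rw [hM, hpow, hroot1, hsplit, e1, e2]
      ring
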